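/- Let A be a real n×n matrix (n ≥ 2), let S be a nonempty proper subset of {1,…,n} with complement S̄, and let λ ∈ ℂ, u, v ∈ ℂⁿ nonzero with A·v = λ·u and Aᵀ·u = λ·v. For j ∈ {1,…,n} and a subset T ⊆ {1,…,n}, write r_j^T(A) = Σ_{k∈T} |a_{jk}| and c_j^T(A) = Σ_{k∈T} |a_{kj}|, and R_i(A) = r_i^{{1,…,n}}(A), C_i(A) = c_i^{{1,…,n}}(A). Then there exist indices i, j lying in different members of the partition {S, S̄} (i.e., i ∈ S, j ∈ S̄ or i ∈ S̄, j ∈ S) such that either (|λ| − r_j^{T̄}(A))·|λ| ≤ r_j^{T}(A)·max(R_i(A), C_i(A)) or (|λ| − c_j^{T̄}(A))·|λ| ≤ c_j^{T}(A)·max(R_i(A), C_i(A)), where T is the member of {S, S̄} containing i and T̄ its complement. -/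

import Mathlib

/-- Key combinatorial/analytic step: if `W` attains its global max at `p ∉ T`,
    we find `i ∈ T` with the desired oval inequality (rows or columns at `p`). -/
lemma stmt_12_aux {n : ℕ} (A : Matrix (Fin n) (Fin n) ℝ) (s : ℝ) (hs : 0 ≤ s)
    (U V W : Fin n → ℝ)
    (hU : ∀ k, 0 ≤ U k) (hV : ∀ k, 0 ≤ V k) (hW : ∀ k, W k = max (U k) (V k))
    (hrow : ∀ j, s * U j ≤ ∑ k, |A j k| * V k)
    (hcol : ∀ j, s * V j ≤ ∑ k, |A k j| * U k)
    (T : Finset (Fin n)) (hT : T.Nonempty) (p : Fin n) (hp : p ∈ Tᶜ)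
    (hmax : ∀ k, W k ≤ W p) (hg : 0 < W p) :
    ∃ i ∈ T,
      ((s - ∑ k ∈ Tᶜ, |A p k|) * s ≤
          (∑ k ∈ T, |A p k|) * max (∑ k, |A i k|) (∑ k, |A k i|) ∨
        (s - ∑ k ∈ Tᶜ, |A k p|) * s ≤
          (∑ k ∈ T, |A k p|) * max (∑ k, |A i k|) (∑ k, |A k i|)) := by
  obtain ⟨i, hiT, hia⟩ := T.exists_max_image W hT
  refine ⟨i, hiT, ?_⟩
  set a := W i with ha_def
  set g := W p with hg_def
  have ha0 : 0 ≤ a := by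
    rw [ha_def, hW]; exact le_max_of_le_left (hU i)
  have hWk : ∀ k, U k ≤ g ∧ V k ≤ g := by
    intro k
    constructor
    · exact le_trans (le_trans (le_max_left _ _) (hW k).symm.le) (hmax k)
    · exact le_trans (le_trans (le_max_right _ _) (hW k).symm.le) (hmax k)
  have hWT : ∀ k ∈ T, U k ≤ a ∧ V k ≤ a := by
    intro k hk
    constructor
    · exact le_trans (le_trans (le_max_left _ _) (hW k).symm.le) (hia k hk)
    · exact le_trans (le_trans (le_max_right _ _) (hW k).symm.le) (hia k hk)
  set Mi := max (∑ k, |A i k|) (∑ k, |A k i|) with hMi_def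
  have hMi0 : 0 ≤ Mi := le_max_of_le_left (Finset.sum_nonneg fun k _ => abs_nonneg _)
  -- Claim B : s * a ≤ Mi * g
  have hB : s * a ≤ Mi * g := by
    rcases le_total (V i) (U i) with h | h
    · have ha : a = U i := by rw [ha_def, hW]; exact max_eq_left h
      calc s * a = s * U i := by rw [ha]
        _ ≤ ∑ k, |A i k| * V k := hrow i
        _ ≤ ∑ k, |A i k| * g := by
            refine Finset.sum_le_sum fun k _ => ?_
            exact mul_le_mul_of_nonneg_left (hWk k).2 (abs_nonneg _)
        _ = (∑ k, |A i k|) * g := by rw [Finset.sum_mul]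
        _ ≤ Mi * g := mul_le_mul_of_nonneg_right (le_max_left _ _) hg.le
    · have ha : a = V i := by rw [ha_def, hW]; exact max_eq_right h
      calc s * a = s * V i := by rw [ha]
        _ ≤ ∑ k, |A k i| * U k := hcol i
        _ ≤ ∑ k, |A k i| * g := by
            refine Finset.sum_le_sum fun k _ => ?_
            exact mul_le_mul_of_nonneg_left (hWk k).1 (abs_nonneg _)
        _ = (∑ k, |A k i|) * g := by rw [Finset.sum_mul]
        _ ≤ Mi * g := mul_le_mul_of_nonneg_right (le_max_right _ _) hg.le
  -- generic finishing step given claim A for a family f (rows or columns)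
  have key : ∀ f : Fin n → ℝ, (∀ k, 0 ≤ f k) →
      s * g ≤ ∑ k, f k * (if k ∈ T then a else g) →
      (s - ∑ k ∈ Tᶜ, f k) * s ≤ (∑ k ∈ T, f k) * Mi := by
    intro f hf hA
    have hfT : 0 ≤ ∑ k ∈ T, f k := Finset.sum_nonneg fun k _ => hf k
    have hfTc : 0 ≤ ∑ k ∈ Tᶜ, f k := Finset.sum_nonneg fun k _ => hf k
    have hsplit : ∑ k, f k * (if k ∈ T then a else g)
        = (∑ k ∈ T, f k) * a + (∑ k ∈ Tᶜ, f k) * g := by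
      rw [← Finset.sum_add_sum_compl T]
      congr 1
      · rw [Finset.sum_mul]
        exact Finset.sum_congr rfl fun k hk => by rw [if_pos hk]
      · rw [Finset.sum_mul]
        exact Finset.sum_congr rfl fun k hk => by
          rw [if_neg (Finset.mem_compl.mp hk)]
    rw [hsplit] at hA
    -- hA : s * g ≤ (∑ k ∈ T, f k) * a + (∑ k ∈ Tᶜ, f k) * g
    by_cases hsc : s ≤ ∑ k ∈ Tᶜ, f k
    · have : (s - ∑ k ∈ Tᶜ, f k) * s ≤ 0 :=
        mul_nonpos_of_nonpos_of_nonneg (by linarith) hs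
      exact le_trans this (mul_nonneg hfT hMi0)
    · push_neg at hsc
      have hA' : (s - ∑ k ∈ Tᶜ, f k) * g ≤ (∑ k ∈ T, f k) * a := by nlinarith
      have hapos : 0 < a := by
        by_contra hna
        push_neg at hna
        have ha0' : a = 0 := le_antisymm hna ha0
        rw [ha0', mul_zero] at hA'
        nlinarith
      have hmul : ((s - ∑ k ∈ Tᶜ, f k) * g) * (s * a)
          ≤ ((∑ k ∈ T, f k) * a) * (Mi * g) := by
        refine mul_le_mul hA' hB (mul_nonneg hs ha0) (mul_nonneg hfT ha0)
      have hga : 0 < g * a := mul_pos hg hapos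
      nlinarith [hmul, hga]
  rcases le_total (V p) (U p) with h | h
  · left
    refine key (fun k => |A p k|) (fun k => abs_nonneg _) ?_
    have hgU : g = U p := by rw [hg_def, hW]; exact max_eq_left h
    calc s * g = s * U p := by rw [hgU]
      _ ≤ ∑ k, |A p k| * V k := hrow p
      _ ≤ ∑ k, |A p k| * (if k ∈ T then a else g) := by
          refine Finset.sum_le_sum fun k _ => ?_
          refine mul_le_mul_of_nonneg_left ?_ (abs_nonneg _)
          by_cases hk : k ∈ T
          · rw [if_pos hk]; exact (hWT k hk).2
          · rw [if_neg hk]; exact (hWk k).2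
  · right
    refine key (fun k => |A k p|) (fun k => abs_nonneg _) ?_
    have hgV : g = V p := by rw [hg_def, hW]; exact max_eq_right h
    calc s * g = s * V p := by rw [hgV]
      _ ≤ ∑ k, |A k p| * U k := hcol p
      _ ≤ ∑ k, |A k p| * (if k ∈ T then a else g) := by
          refine Finset.sum_le_sum fun k _ => ?_
          refine mul_le_mul_of_nonneg_left ?_ (abs_nonneg _)
          by_cases hk : k ∈ T
          · rw [if_pos hk]; exact (hWT k hk).1
          · rw [if_neg hk]; exact (hWk k).1

theorem stmt_12 {n : ℕ} (hn : 2 ≤ n) (A : Matrix (Fin n) (Fin n) ℝ)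
    (S : Finset (Fin n)) (hS1 : S.Nonempty) (hS2 : S ≠ Finset.univ)
    (lam : ℂ) (u v : Fin n → ℂ) (hu : u ≠ 0) (hv : v ≠ 0)
    (h1 : (A.map (Complex.ofReal)).mulVec v = lam • u)
    (h2 : (A.map (Complex.ofReal)).transpose.mulVec u = lam • v) :
    ∃ i j : Fin n, ((i ∈ S ∧ j ∉ S) ∨ (i ∉ S ∧ j ∈ S)) ∧
      ((‖lam‖ - ∑ k ∈ (if i ∈ S then S else Sᶜ)ᶜ, |A j k|) * ‖lam‖ ≤
          (∑ k ∈ (if i ∈ S then S else Sᶜ), |A j k|) *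
            max (∑ k, |A i k|) (∑ k, |A k i|) ∨
        (‖lam‖ - ∑ k ∈ (if i ∈ S then S else Sᶜ)ᶜ, |A k j|) * ‖lam‖ ≤
          (∑ k ∈ (if i ∈ S then S else Sᶜ), |A k j|) *
            max (∑ k, |A i k|) (∑ k, |A k i|)) := by
  set s := ‖lam‖ with hs_def
  have hs : 0 ≤ s := norm_nonneg lam
  set U : Fin n → ℝ := fun k => ‖u k‖ with hU_def
  set V : Fin n → ℝ := fun k => ‖v k‖ with hV_def
  set W : Fin n → ℝ := fun k => max (U k) (V k) with hW_def
  have hU : ∀ k, 0 ≤ U k := fun k => norm_nonneg _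
  have hV : ∀ k, 0 ≤ V k := fun k => norm_nonneg _
  have hW : ∀ k, W k = max (U k) (V k) := fun k => rfl
  have hrow : ∀ j, s * U j ≤ ∑ k, |A j k| * V k := by
    intro j
    have h := congrFun h1 j
    simp only [Matrix.mulVec, dotProduct, Matrix.map_apply, Pi.smul_apply,
      smul_eq_mul] at h
    calc s * U j = ‖lam * u j‖ := (norm_mul _ _).symm
      _ = ‖∑ k, (A j k : ℂ) * v k‖ := by rw [← h]
      _ ≤ ∑ k, ‖(A j k : ℂ) * v k‖ :=
            norm_sum_le _ _
      _ = ∑ k, |A j k| * V k := by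
            refine Finset.sum_congr rfl fun k _ => ?_
            rw [norm_mul, Complex.norm_real, Real.norm_eq_abs]
  have hcol : ∀ j, s * V j ≤ ∑ k, |A k j| * U k := by
    intro j
    have h := congrFun h2 j
    simp only [Matrix.mulVec, dotProduct, Matrix.transpose_apply, Matrix.map_apply,
      Pi.smul_apply, smul_eq_mul] at h
    calc s * V j = ‖lam * v j‖ := (norm_mul _ _).symm
      _ = ‖∑ k, (A k j : ℂ) * u k‖ := by rw [← h]
      _ ≤ ∑ k, ‖(A k j : ℂ) * u k‖ :=
            norm_sum_le _ _
      _ = ∑ k, |A k j| * U k := by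
            refine Finset.sum_congr rfl fun k _ => ?_
            rw [norm_mul, Complex.norm_real, Real.norm_eq_abs]
  have huniv : (Finset.univ : Finset (Fin n)).Nonempty := by
    refine ⟨⟨0, by omega⟩, Finset.mem_univ _⟩
  obtain ⟨p, -, hpmax⟩ := Finset.exists_max_image Finset.univ W huniv
  have hpmax' : ∀ k, W k ≤ W p := fun k => hpmax k (Finset.mem_univ k)
  have hgpos : 0 < W p := by
    obtain ⟨k, hk⟩ := Function.ne_iff.mp hu
    have : 0 < U k := by
      simpa [hU_def] using norm_pos_iff.mpr hk
    exact lt_of_lt_of_le (lt_of_lt_of_le this (le_max_left _ _)) (hpmax' k)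
  by_cases hpS : p ∈ S
  · -- take T = Sᶜ, i ∈ Sᶜ, j = p ∈ S
    have hTne : (Sᶜ : Finset (Fin n)).Nonempty := Finset.nonempty_iff_ne_empty.mpr (fun h => hS2 ((Finset.compl_eq_empty_iff S).mp h))
    have hpTc : p ∈ (Sᶜ)ᶜ := by simpa using hpS
    obtain ⟨i, hiT, hineq⟩ :=
      stmt_12_aux A s hs U V W hU hV hW hrow hcol Sᶜ hTne p hpTc hpmax' hgpos
    have hiS : i ∉ S := Finset.mem_compl.mp hiT
    refine ⟨i, p, Or.inr ⟨hiS, hpS⟩, ?_⟩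
    simp only [if_neg hiS, compl_compl]
    simpa only [compl_compl] using hineq
  · -- take T = S, i ∈ S, j = p ∉ S
    have hpTc : p ∈ Sᶜ := Finset.mem_compl.mpr hpS
    obtain ⟨i, hiT, hineq⟩ :=
      stmt_12_aux A s hs U V W hU hV hW hrow hcol S hS1 p hpTc hpmax' hgpos
    refine ⟨i, p, Or.inl ⟨hiT, hpS⟩, ?_⟩
    simpa only [if_pos hiT] using hineq
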